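/- Let A, B, C > 0 and real numbers a, p, b with 0 < a < p < b. Define Φ(s) := (s^p/p)A − μ(s^a/a')B' − (s^b/b')C' where a' , b' are positive constants and μ > 0, and suppose Φ'(s) = s^{p−1}A − μ α s^{a−1}B − β s^{b−1}C with α, β > 0. Then the equation Φ'(s) = 0 has: exactly two solutions 0 < s₊ < s₋ if μαB < max_{s>0}(s^{p−a}A − β s^{b−a}C); exactly one solution if equality holds; and no solution if μαB exceeds this maximum. -/

import Mathlib

open Real Set Filter Topology

/-- Structure of critical points of the fibering map: the equation
Φ'(s) = s^{p−1}A − μα s^{a−1}B − β s^{b−1}C = 0 on (0,∞) has exactly two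
solutions if μαB is below the maximum of h(s) = s^{p−a}A − β s^{b−a}C,
exactly one if equal, and none if above. -/
theorem stmt_3 (A B C μ α β a p b : ℝ) (hA : 0 < A) (hB : 0 < B) (hC : 0 < C)
    (hμ : 0 < μ) (hα : 0 < α) (hβ : 0 < β)
    (ha : 0 < a) (hap : a < p) (hpb : p < b) :
    let f : ℝ → ℝ := fun s => s ^ (p - 1) * A - μ * α * s ^ (a - 1) * B - β * s ^ (b - 1) * C
    let M : ℝ := sSup ((fun s => s ^ (p - a) * A - β * s ^ (b - a) * C) '' Set.Ioi (0 : ℝ))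
    (μ * α * B < M →
      ∃ s₁ s₂ : ℝ, 0 < s₁ ∧ s₁ < s₂ ∧ f s₁ = 0 ∧ f s₂ = 0 ∧
        ∀ s, 0 < s → f s = 0 → s = s₁ ∨ s = s₂) ∧
    (μ * α * B = M → ∃! s : ℝ, 0 < s ∧ f s = 0) ∧
    (M < μ * α * B → ∀ s, 0 < s → f s ≠ 0) := by
  intro f M
  set k := p - a with hk
  set m := b - a with hm
  have hk0 : 0 < k := by simp only [hk]; linarith
  have hm0 : 0 < m := by simp only [hm]; linarith
  have hkm : k < m := by simp only [hk, hm]; linarith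
  have hmk0 : 0 < m - k := by linarith
  have hQ : 0 < β * C := mul_pos hβ hC
  have hmQ : 0 < m * (β * C) := mul_pos hm0 hQ
  set g : ℝ → ℝ := fun s => s ^ k * A - β * s ^ m * C with hgdef
  -- the critical point of g
  set R : ℝ := k * A / (m * (β * C)) with hRdef
  have hR : 0 < R := by positivity
  set s0 : ℝ := R ^ (m - k)⁻¹ with hs0def
  have hs0 : 0 < s0 := Real.rpow_pos_of_pos hR _
  have hs0pow : s0 ^ (m - k) = R := Real.rpow_inv_rpow hR.le hmk0.ne'
  -- derivative of g
  have hderiv : ∀ s : ℝ, 0 < s →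
      HasDerivAt g (s ^ (k - 1) * (k * A - m * (β * C) * s ^ (m - k))) s := by
    intro s hs
    have h1 : HasDerivAt (fun s : ℝ => s ^ k) (k * s ^ (k - 1)) s :=
      Real.hasDerivAt_rpow_const (Or.inl hs.ne')
    have h2 : HasDerivAt (fun s : ℝ => s ^ m) (m * s ^ (m - 1)) s :=
      Real.hasDerivAt_rpow_const (Or.inl hs.ne')
    have h3 := (h1.mul_const A).sub ((h2.const_mul β).mul_const C)
    refine h3.congr_deriv ?_
    have hsm : s ^ (m - 1) = s ^ (k - 1) * s ^ (m - k) := by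
      rw [← Real.rpow_add hs]; congr 1; ring
    rw [hsm]; ring
  -- continuity of g on [0,∞)
  have hcont : ContinuousOn g (Ici 0) := by
    intro x hx
    exact (((Real.continuousAt_rpow_const x k (Or.inr hk0.le)).mul continuousAt_const).sub
      ((continuousAt_const.mul
        (Real.continuousAt_rpow_const x m (Or.inr hm0.le))).mul continuousAt_const)).continuousWithinAt
  -- monotonicity
  have hmono : StrictMonoOn g (Icc 0 s0) := by
    apply strictMonoOn_of_deriv_pos (convex_Icc _ _)
      (hcont.mono (fun x hx => hx.1))
    intro s hs
    rw [interior_Icc] at hs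
    rw [(hderiv s hs.1).deriv]
    have h1 : s ^ (m - k) < R := by
      calc s ^ (m - k) < s0 ^ (m - k) := Real.rpow_lt_rpow hs.1.le hs.2 hmk0
        _ = R := hs0pow
    have h2 : m * (β * C) * s ^ (m - k) < k * A := by
      have h3 := (mul_lt_mul_iff_right₀ hmQ).mpr h1
      have h4 : m * (β * C) * R = k * A := by
        rw [hRdef]; field_simp
      linarith
    exact mul_pos (Real.rpow_pos_of_pos hs.1 _) (by linarith)
  have hanti : StrictAntiOn g (Ici s0) := by
    apply strictAntiOn_of_deriv_neg (convex_Ici _)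
      (hcont.mono (fun x hx => le_trans hs0.le hx))
    intro s hs
    rw [interior_Ici] at hs
    have hs' : 0 < s := lt_trans hs0 hs
    rw [(hderiv s hs').deriv]
    have h1 : R < s ^ (m - k) := by
      calc R = s0 ^ (m - k) := hs0pow.symm
        _ < s ^ (m - k) := Real.rpow_lt_rpow hs0.le hs hmk0
    have h2 : k * A < m * (β * C) * s ^ (m - k) := by
      have h3 := (mul_lt_mul_iff_right₀ hmQ).mpr h1
      have h4 : m * (β * C) * R = k * A := by
        rw [hRdef]; field_simp
      linarith
    exact mul_neg_of_pos_of_neg (Real.rpow_pos_of_pos hs' _) (by linarith)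
  -- g s0 is the greatest value
  have hgreat : IsGreatest (g '' Ioi 0) (g s0) := by
    constructor
    · exact ⟨s0, hs0, rfl⟩
    · rintro y ⟨s, hs, rfl⟩
      rcases le_total s s0 with h | h
      · exact hmono.monotoneOn ⟨(le_of_lt hs), h⟩ ⟨hs0.le, le_refl _⟩ h
      · exact hanti.antitoneOn (mem_Ici.mpr (le_refl _)) (mem_Ici.mpr h) h
  have hM : M = g s0 := hgreat.csSup_eq
  -- reduce f = 0 to g = μαB
  have hfg : ∀ s : ℝ, 0 < s → (f s = 0 ↔ g s = μ * α * B) := by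
    intro s hs
    have e1 : s ^ (p - 1) = s ^ (a - 1) * s ^ k := by
      rw [← Real.rpow_add hs]; congr 1; rw [hk]; ring
    have e2 : s ^ (b - 1) = s ^ (a - 1) * s ^ m := by
      rw [← Real.rpow_add hs]; congr 1; rw [hm]; ring
    have key : f s = s ^ (a - 1) * (g s - μ * α * B) := by
      show s ^ (p - 1) * A - μ * α * s ^ (a - 1) * B - β * s ^ (b - 1) * C
        = s ^ (a - 1) * ((s ^ k * A - β * s ^ m * C) - μ * α * B)
      rw [e1, e2]; ring
    rw [key, mul_eq_zero, sub_eq_zero]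
    simp [(Real.rpow_pos_of_pos hs (a - 1)).ne']
  have hμαB : 0 < μ * α * B := by positivity
  refine ⟨?_, ?_, ?_⟩
  · -- two solutions
    intro hlt
    rw [hM] at hlt
    -- right solution: find T with g T < 0
    set T1 : ℝ := (A / (β * C) + 1) ^ (m - k)⁻¹ with hT1def
    have hT1 : 0 < T1 := Real.rpow_pos_of_pos (by positivity) _
    set T : ℝ := max s0 T1 + 1 with hTdef
    have hTs0 : s0 < T := lt_of_le_of_lt (le_max_left _ _) (lt_add_one _)
    have hT1T : T1 < T := lt_of_le_of_lt (le_max_right _ _) (lt_add_one _)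
    have hT0 : 0 < T := lt_trans hs0 hTs0
    have hgT : g T < 0 := by
      have h1 : T ^ m = T ^ k * T ^ (m - k) := by
        rw [← Real.rpow_add hT0]; congr 1; ring
      have h2 : A / (β * C) + 1 < T ^ (m - k) := by
        calc A / (β * C) + 1 = T1 ^ (m - k) :=
              (Real.rpow_inv_rpow (by positivity) hmk0.ne').symm
          _ < T ^ (m - k) := Real.rpow_lt_rpow hT1.le hT1T hmk0
      have h2' : A < (β * C) * T ^ (m - k) := by
        have h2'' : A / (β * C) < T ^ (m - k) := by linarith
        rw [mul_comm]; exact (div_lt_iff₀ hQ).mp h2''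
      have h3 : (0:ℝ) < T ^ k := Real.rpow_pos_of_pos hT0 _
      have h4 : g T = T ^ k * (A - (β * C) * T ^ (m - k)) := by
        show T ^ k * A - β * T ^ m * C = _
        rw [h1]; ring
      rw [h4]
      exact mul_neg_of_pos_of_neg h3 (by linarith)
    -- find s₂ ∈ (s0, T] with g s₂ = μαB
    have hsub2 : Icc s0 T ⊆ Ici (0:ℝ) := fun x hx => le_trans hs0.le hx.1
    obtain ⟨s₂, hs₂mem, hgs₂⟩ :=
      intermediate_value_Icc' hTs0.le (hcont.mono hsub2)
        (⟨by linarith, by linarith⟩ : μ * α * B ∈ Icc (g T) (g s0))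
    have hs₂ne : s₂ ≠ s0 := by
      intro h; rw [h] at hgs₂; linarith
    have hs0s₂ : s0 < s₂ := lt_of_le_of_ne hs₂mem.1 (Ne.symm hs₂ne)
    -- find ε near 0 with g ε < μαB
    have hg0 : g 0 = 0 := by
      show (0:ℝ) ^ k * A - β * (0:ℝ) ^ m * C = 0
      rw [Real.zero_rpow hk0.ne', Real.zero_rpow hm0.ne']; ring
    have htend : Tendsto g (𝓝[>] (0:ℝ)) (𝓝 (g 0)) :=
      ((hcont 0 (self_mem_Ici)).tendsto).mono_left
        (nhdsWithin_mono 0 Ioi_subset_Ici_self)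
    have hev : ∀ᶠ s in 𝓝[>] (0:ℝ), g s < μ * α * B :=
      htend.eventually_lt_const (by rw [hg0]; exact hμαB)
    have hev2 : ∀ᶠ s in 𝓝[>] (0:ℝ), s ∈ Ioo (0:ℝ) s0 :=
      Ioo_mem_nhdsGT_of_mem ⟨le_refl 0, hs0⟩
    obtain ⟨ε, hε1, hε2⟩ := (hev.and hev2).exists
    -- find s₁ ∈ [ε, s0) with g s₁ = μαB
    have hsub1 : Icc ε s0 ⊆ Ici (0:ℝ) := fun x hx => le_trans hε2.1.le hx.1
    obtain ⟨s₁, hs₁mem, hgs₁⟩ :=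
      intermediate_value_Icc hε2.2.le (hcont.mono hsub1)
        (⟨by linarith, by linarith⟩ : μ * α * B ∈ Icc (g ε) (g s0))
    have hs₁ne : s₁ ≠ s0 := by
      intro h; rw [h] at hgs₁; linarith
    have hs₁s0 : s₁ < s0 := lt_of_le_of_ne hs₁mem.2 hs₁ne
    have hs₁0 : 0 < s₁ := lt_of_lt_of_le hε2.1 hs₁mem.1
    refine ⟨s₁, s₂, hs₁0, lt_trans hs₁s0 hs0s₂,
      (hfg s₁ hs₁0).mpr hgs₁, (hfg s₂ (lt_trans hs0 hs0s₂)).mpr hgs₂, ?_⟩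
    intro s hs hfs
    have hgs := (hfg s hs).mp hfs
    rcases lt_trichotomy s s0 with h | h | h
    · left
      exact hmono.injOn ⟨hs.le, h.le⟩ ⟨hs₁0.le, hs₁s0.le⟩ (hgs.trans hgs₁.symm)
    · exfalso; rw [h] at hgs; linarith
    · right
      exact hanti.injOn (mem_Ici.mpr h.le) (mem_Ici.mpr hs₂mem.1) (hgs.trans hgs₂.symm)
  · -- exactly one solution
    intro heq
    rw [hM] at heq
    refine ⟨s0, ⟨hs0, (hfg s0 hs0).mpr heq.symm⟩, ?_⟩
    rintro s ⟨hs, hfs⟩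
    have hgs : g s = g s0 := ((hfg s hs).mp hfs).trans heq
    rcases lt_trichotomy s s0 with h | h | h
    · exfalso
      have := hmono ⟨hs.le, h.le⟩ ⟨hs0.le, le_refl _⟩ h
      linarith
    · exact h
    · exfalso
      have := hanti (mem_Ici.mpr (le_refl _)) (mem_Ici.mpr h.le) h
      linarith
  · -- no solution
    intro hlt s hs hfs
    have hgs := (hfg s hs).mp hfs
    have hle : g s ≤ g s0 := hgreat.2 ⟨s, hs, rfl⟩
    rw [hM] at hlt
    linarith
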